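/- arXiv:math/0610258 — 3 statements merged into one kernel-verified Lean document; each statement's English description precedes it below -/
import Mathlib

section
/- Let T be a triangulated category and H a coherent contravariant additive functor on T. Then H is cohomological if and only if Ext^i(F, H) = 0 in the abelian category of coherent functors for every coherent functor F on T and every i ≥ 1. -/
open CategoryTheory CategoryTheory.Limits CategoryTheory.Pretriangulated Opposite

universe w v u

namespace GeneralizedSerreDuality

section
variable (C : Type v) [Category.{w} C] [Preadditive C]

/-- A contravariant additive functor `F : Cᵒᵖ ⥤ Ab` is coherent if there is an exact
sequence of functors `(-, C₀) → (-, C₁) → F → 0`. -/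
def IsCoherent (F : Cᵒᵖ ⥤ AddCommGrpCat.{w}) : Prop :=
  ∃ (C₀ C₁ : C) (f : C₀ ⟶ C₁) (π : preadditiveYoneda.obj C₁ ⟶ F),
    (∀ Y : C, Function.Exact (fun h : Y ⟶ C₀ => h ≫ f) (π.app (op Y))) ∧
    (∀ Y : C, Function.Surjective (π.app (op Y)))

end

section
variable (C : Type v) [Category.{w} C] [Preadditive C] [HasZeroObject C] [HasShift C ℤ]
  [∀ n : ℤ, (shiftFunctor C n).Additive] [Pretriangulated C]

/-- A contravariant additive functor `H : Cᵒᵖ ⥤ Ab` on a triangulated category is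
cohomological if it sends distinguished triangles to exact sequences. -/
def IsCohomological (H : Cᵒᵖ ⥤ AddCommGrpCat.{w}) : Prop :=
  ∀ T : Triangle C, T ∈ (distTriang C) →
    Function.Exact (H.map T.mor₂.op) (H.map T.mor₁.op) ∧
    Function.Exact (H.map T.mor₃.op) (H.map T.mor₂.op)

end

/-! ### Auxiliary constructions -/

section CokerAux
variable {D : Type v} [Category.{w} D] [Preadditive D]

/-- Postcomposition with `f` as an additive map. -/
def compHom {A B : D} (f : A ⟶ B) (Y : D) : (Y ⟶ A) →+ (Y ⟶ B) :=
  AddMonoidHom.mk' (fun h => h ≫ f) (fun _ _ => Preadditive.add_comp _ _ _ _ _ _)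

@[simp] lemma compHom_apply {A B : D} (f : A ⟶ B) (Y : D) (h : Y ⟶ A) :
    compHom f Y h = h ≫ f := rfl

/-- The cokernel of `(-, A) ⟶ (-, B)` as a functor. -/
def cokerFunctor {A B : D} (f : A ⟶ B) : Dᵒᵖ ⥤ AddCommGrpCat.{w} where
  obj Y := AddCommGrpCat.of ((Y.unop ⟶ B) ⧸ (compHom f Y.unop).range)
  map {Y Z} g := AddCommGrpCat.ofHom <| QuotientAddGroup.map _ _
      (AddMonoidHom.mk' (fun h => g.unop ≫ h) (fun _ _ => Preadditive.comp_add _ _ _ _ _ _))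
      (by
        rintro x ⟨h, rfl⟩
        exact ⟨g.unop ≫ h, by simp⟩)
  map_id Y := by
    ext h
    simp [QuotientAddGroup.map_mk]
  map_comp {X Y Z} g g' := by
    ext h
    show (QuotientAddGroup.mk ((g ≫ g').unop ≫ h) : _ ⧸ (compHom f (unop Z)).range) =
      QuotientAddGroup.mk (g'.unop ≫ g.unop ≫ h)
    rw [unop_comp, Category.assoc]

/-- The projection onto the cokernel functor. -/
def cokerProj {A B : D} (f : A ⟶ B) : preadditiveYoneda.obj B ⟶ cokerFunctor f where
  app Y := AddCommGrpCat.ofHom (QuotientAddGroup.mk' (compHom f Y.unop).range)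
  naturality Y Z g := by
    ext h
    rfl

lemma cokerSurj {A B : D} (f : A ⟶ B) (Y : D) :
    Function.Surjective ((cokerProj f).app (op Y)) :=
  QuotientAddGroup.mk'_surjective (compHom f Y).range

lemma cokerExact {A B : D} (f : A ⟶ B) (Y : D) :
    Function.Exact (fun h : Y ⟶ A => h ≫ f) ((cokerProj f).app (op Y)) := by
  intro h
  constructor
  · intro hh
    have : h ∈ (compHom f Y).range := by
      rwa [← QuotientAddGroup.eq_zero_iff h]
    obtain ⟨a, ha⟩ := this
    exact ⟨a, ha⟩
  · rintro ⟨a, rfl⟩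
    exact (QuotientAddGroup.eq_zero_iff _).mpr ⟨a, rfl⟩

lemma cokerCoherent {A B : D} (f : A ⟶ B) : IsCoherent D (cokerFunctor f) :=
  ⟨A, B, f, cokerProj f, fun Y => cokerExact f Y, fun Y => cokerSurj f Y⟩

end CokerAux

section TriAux
variable {D : Type v} [Category.{w} D] [Preadditive D] [HasZeroObject D] [HasShift D ℤ]
  [∀ n : ℤ, (shiftFunctor D n).Additive] [Pretriangulated D]

/-- Iterated inverse rotation of a triangle. -/
def triSeq (T : Triangle D) : ℕ → Triangle D
  | 0 => T
  | n + 1 => (triSeq T n).invRotate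

lemma triSeq_distinguished (T : Triangle D) (hT : T ∈ distTriang D) :
    ∀ n, triSeq T n ∈ distTriang D := by
  intro n
  induction n with
  | zero => exact hT
  | succ n ih => exact inv_rot_of_distTriang _ ih

lemma yonedaExactPair (T : Triangle D) (hT : T ∈ distTriang D) (Y : D) :
    Function.Exact (fun h : Y ⟶ T.obj₁ => h ≫ T.mor₁)
      (fun h : Y ⟶ T.obj₂ => h ≫ T.mor₂) := by
  intro h
  constructor
  · intro hh
    obtain ⟨g, hg⟩ := Triangle.coyoneda_exact₂ T hT h hh
    exact ⟨g, hg.symm⟩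
  · rintro ⟨g, rfl⟩
    show (g ≫ T.mor₁) ≫ T.mor₂ = 0
    rw [Category.assoc, comp_distTriang_mor_zero₁₂ T hT, comp_zero]

end TriAux

/-- **Lemma 2.3**: let `T` be a triangulated category and `H` a coherent (contravariant
additive) functor on `T`.  Then `H` is cohomological if and only if `Ext^i(F, H) = 0` for
every coherent functor `F` and every `i ≥ 1`.  Since representable functors are projective
and every coherent functor has a resolution by representable functors, the Ext-vanishing is
expressed here by saying: for every coherent `F` and every projective resolution
`⋯ → (-, P₁) → (-, P₀) → F → 0` of `F` by representable functors, the induced complex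
`Hom((-, P₀), H) → Hom((-, P₁), H) → ⋯`, which by Yoneda is `H(P₀) → H(P₁) → ⋯`,
is exact at every position `i ≥ 1`. -/
theorem coherent_cohomological_iff_ext_vanishing
    (C : Type v) [Category.{w} C] [Preadditive C] [HasZeroObject C] [HasShift C ℤ]
    [∀ n : ℤ, (shiftFunctor C n).Additive] [Pretriangulated C]
    (H : Cᵒᵖ ⥤ AddCommGrpCat.{w}) [H.Additive] (hH : IsCoherent C H) :
    IsCohomological C H ↔
      ∀ (F : Cᵒᵖ ⥤ AddCommGrpCat.{w}), IsCoherent C F →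
      ∀ (P : ℕ → C) (d : ∀ n, P (n + 1) ⟶ P n) (π : preadditiveYoneda.obj (P 0) ⟶ F),
        (∀ Y : C, Function.Surjective (π.app (op Y))) →
        (∀ Y : C, Function.Exact (fun h : Y ⟶ P 1 => h ≫ d 0) (π.app (op Y))) →
        (∀ (n : ℕ) (Y : C), Function.Exact
          (fun h : Y ⟶ P (n + 2) => h ≫ d (n + 1)) (fun h : Y ⟶ P (n + 1) => h ≫ d n)) →
        ∀ n : ℕ, Function.Exact (H.map (d n).op) (H.map (d (n + 1)).op) := by
  constructor
  · -- cohomological implies Ext-vanishing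
    intro hcoh F hF P d π hsurj hex0 hexn n
    have hz : d (n + 1) ≫ d n = 0 := by
      have := (hexn n (P (n + 2)) (𝟙 _ ≫ d (n + 1))).mpr ⟨𝟙 _, rfl⟩
      simpa using this
    obtain ⟨W, u', w', hU⟩ := distinguished_cocone_triangle (d n)
    have hU' := inv_rot_of_distTriang _ hU
    obtain ⟨h1, -⟩ := hcoh _ hU'
    intro x
    constructor
    · intro hx
      have hud : (Triangle.mk (d n) u' w').invRotate.mor₁ ≫ d n = 0 :=
        comp_distTriang_mor_zero₁₂ _ hU'
      obtain ⟨a, ha⟩ := (hexn n _ _).mp hud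
      have ha' : a ≫ d (n + 1) = (Triangle.mk (d n) u' w').invRotate.mor₁ := ha
      have hux : H.map (Triangle.mk (d n) u' w').invRotate.mor₁.op x = 0 := by
        rw [← ha']
        calc H.map ((a ≫ d (n + 1)).op) x
            = (H.map ((d (n + 1)).op) ≫ H.map a.op) x := by rw [← H.map_comp]; rfl
          _ = H.map a.op (H.map ((d (n + 1)).op) x) := rfl
          _ = H.map a.op 0 := congrArg _ hx
          _ = 0 := map_zero _
      exact (h1 x).mp hux
    · rintro ⟨z, rfl⟩
      have : H.map ((d n).op ≫ (d (n + 1)).op) z = 0 := by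
        rw [← op_comp, hz, op_zero, H.map_zero]
        rfl
      rw [H.map_comp, comp_apply] at this
      exact this
  · -- Ext-vanishing implies cohomological
    intro hext
    have key : ∀ T : Triangle C, T ∈ (distTriang C) →
        Function.Exact (H.map T.mor₂.op) (H.map T.mor₁.op) := by
      intro T hT
      have hS := triSeq_distinguished T hT
      exact hext (cokerFunctor (triSeq T 0).mor₂) (cokerCoherent _)
        (fun n => (triSeq T n).obj₃) (fun n => (triSeq T n).mor₂) (cokerProj _)
        (fun Y => cokerSurj _ Y) (fun Y => cokerExact _ Y)
        (fun n Y => yonedaExactPair _ (hS n) Y) 0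
    intro T hT
    exact ⟨key T hT, key T.rotate (rot_of_distTriang T hT)⟩

end GeneralizedSerreDuality
end

section
/- Let R be a commutative artinian ring and T a Hom-finite Krull-Schmidt R-linear triangulated category. Then for an object X of T, the functor D Hom_T(X, −) is representable if and only if it is a coherent functor; consequently T_r = {X ∈ T : D Hom_T(X, −) is coherent}. -/
open CategoryTheory CategoryTheory.Limits CategoryTheory.Linear
open CategoryTheory.Pretriangulated ZeroObject

universe w v u

namespace GeneralizedSerreDuality

/-- `E` is a minimal injective cogenerator for the commutative ring `R`. -/
structure IsMinimalInjectiveCogenerator (R : Type u) [CommRing R]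
    (E : Type u) [AddCommGroup E] [Module R E] : Prop where
  injective : Module.Injective R E
  cogenerates : ∀ (M : Type u) [AddCommGroup M] [Module R M] (m : M), m ≠ 0 →
    ∃ f : M →ₗ[R] E, f m ≠ 0
  minimal : ∀ (E' : Type u) [AddCommGroup E'] [Module R E'], Module.Injective R E' →
    (∀ (M : Type u) [AddCommGroup M] [Module R M] (m : M), m ≠ 0 →
      ∃ f : M →ₗ[R] E', f m ≠ 0) →
    ∃ g : E →ₗ[R] E', Function.Injective g

section
variable (R : Type u) [CommRing R] (E : Type u) [AddCommGroup E] [Module R E]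
variable {C : Type v} [Category.{w} C] [Preadditive C] [CategoryTheory.Linear R C]

/-- `X ∈ C_r`: `D Hom(X, -)` is representable. -/
def MemR (X : C) : Prop :=
  ∃ (SX : C) (φ : ∀ Y : C, ((X ⟶ Y) →ₗ[R] E) ≃ₗ[R] (Y ⟶ SX)),
    ∀ ⦃Y Y' : C⦄ (g : Y ⟶ Y') (ψ : (X ⟶ Y') →ₗ[R] E),
      φ Y (ψ ∘ₗ Linear.rightComp R X g) = g ≫ φ Y' ψ

/-- The contravariant functor `D Hom(X, -)` is coherent: there are objects `C₀, C₁` and an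
exact sequence of functors `(-, C₀) → (-, C₁) → D Hom(X, -) → 0`,
given pointwise by a natural family of additive maps. -/
def DHomRightCoherent (X : C) : Prop :=
  ∃ (C₀ C₁ : C) (f : C₀ ⟶ C₁) (π : ∀ Y : C, (Y ⟶ C₁) →+ ((X ⟶ Y) →ₗ[R] E)),
    (∀ ⦃Y Y' : C⦄ (g : Y' ⟶ Y) (h : Y ⟶ C₁),
      π Y' (g ≫ h) = (π Y h) ∘ₗ Linear.rightComp R X g) ∧
    (∀ Y : C, Function.Exact (fun h : Y ⟶ C₀ => h ≫ f) (π Y)) ∧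
    (∀ Y : C, Function.Surjective (π Y))

end

/-- An additive category is Krull-Schmidt if every object is a finite direct sum of
objects with local endomorphism rings. -/
def IsKrullSchmidt (C : Type v) [Category.{w} C] [Preadditive C]
    [HasFiniteBiproducts C] : Prop :=
  ∀ X : C, ∃ (n : ℕ) (f : Fin n → C),
    Nonempty (X ≅ ⨁ f) ∧ ∀ i, IsLocalRing (End (f i))

section SplitAux


section Split
variable {C : Type v} [Category.{w} C] [Preadditive C] [HasFiniteBiproducts C]

attribute [local instance] hasBinaryBiproducts_of_finite_biproducts

/-- An idempotent splits. -/
def SplitsAs {Z : C} (p : Z ⟶ Z) : Prop :=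
  ∃ (Y : C) (i : Y ⟶ Z) (e : Z ⟶ Y), i ≫ e = 𝟙 Y ∧ e ≫ i = p

lemma splitsAs_conj {Z Z' : C} (g : Z' ⟶ Z) (h : Z ⟶ Z') (hgh : g ≫ h = 𝟙 Z')
    (hhg : h ≫ g = 𝟙 Z) (q : Z ⟶ Z) (hs : SplitsAs (g ≫ q ≫ h)) : SplitsAs q := by
  obtain ⟨Y, i, e, hie, hei⟩ := hs
  refine ⟨Y, i ≫ g, h ≫ e, by rw [Category.assoc, ← Category.assoc g h e, hgh,
    Category.id_comp, hie], ?_⟩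
  have : (h ≫ e) ≫ i ≫ g = h ≫ (e ≫ i) ≫ g := by simp
  rw [this, hei]
  calc h ≫ (g ≫ q ≫ h) ≫ g = (h ≫ g) ≫ q ≫ (h ≫ g) := by simp
  _ = q := by rw [hhg]; simp

/-- Splitting from a row-zero idempotent. -/
lemma splitsAs_of_row_zero {X W : C} (r : X ⊞ W ⟶ X ⊞ W) (hr : r ≫ r = r)
    (h0 : biprod.inl ≫ r = 0)
    (hn : SplitsAs (biprod.inr ≫ r ≫ biprod.snd)) : SplitsAs r := by
  obtain ⟨Y, i, e, hie, hei⟩ := hn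
  have h2 : r ≫ biprod.fst ≫ biprod.inl ≫ r = 0 := by rw [h0]; simp
  have key : r ≫ biprod.snd ≫ biprod.inr ≫ r = r := by
    have h1 : (biprod.snd ≫ biprod.inr ≫ r : X ⊞ W ⟶ _)
        = r - biprod.fst ≫ biprod.inl ≫ r := by
      calc biprod.snd ≫ biprod.inr ≫ r = (𝟙 _ - biprod.fst ≫ biprod.inl) ≫ r := by
            rw [← biprod.total]
            simp only [Preadditive.sub_comp, Preadditive.add_comp, Category.assoc]
            abel
        _ = r - biprod.fst ≫ biprod.inl ≫ r := by
            simp [Preadditive.sub_comp]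
    rw [h1, Preadditive.comp_sub, hr, h2, sub_zero]
  refine ⟨Y, i ≫ biprod.inr ≫ r, r ≫ biprod.snd ≫ e, ?_, ?_⟩
  · have h3 : (i ≫ biprod.inr ≫ r) ≫ r ≫ biprod.snd ≫ e
        = i ≫ (biprod.inr ≫ (r ≫ r) ≫ biprod.snd) ≫ e := by simp
    rw [h3, hr, ← hei]
    calc i ≫ (e ≫ i) ≫ e = (i ≫ e) ≫ i ≫ e := by simp
      _ = 𝟙 Y := by rw [hie]; simp [hie]
  · have h4 : (r ≫ biprod.snd ≫ e) ≫ i ≫ biprod.inr ≫ r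
        = r ≫ biprod.snd ≫ (e ≫ i) ≫ biprod.inr ≫ r := by simp
    rw [h4, hei]
    have h5 : r ≫ biprod.snd ≫ (biprod.inr ≫ r ≫ biprod.snd) ≫ biprod.inr ≫ r
        = r ≫ biprod.snd ≫ biprod.inr ≫ r ≫ biprod.snd ≫ biprod.inr ≫ r := by simp
    rw [h5, key, key]

/-- Splitting from a row-one idempotent. -/
lemma splitsAs_of_row_one {X W : C} (r : X ⊞ W ⟶ X ⊞ W) (hr : r ≫ r = r)
    (h1 : biprod.inl ≫ r = biprod.inl)
    (hn : SplitsAs (biprod.inr ≫ r ≫ biprod.snd)) : SplitsAs r := by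
  obtain ⟨Y, i', e', hie, hei⟩ := hn
  have h1' : ∀ {T : C} (k : X ⊞ W ⟶ T), biprod.inl ≫ r ≫ k = biprod.inl ≫ k := by
    intro T k; rw [← Category.assoc, h1]
  have hr' : ∀ {T : C} (k : X ⊞ W ⟶ T), r ≫ r ≫ k = r ≫ k := by
    intro T k; rw [← Category.assoc, hr]
  have key2 : r ≫ biprod.snd ≫ biprod.inr ≫ r = r - r ≫ biprod.fst ≫ biprod.inl := by
    have t1 : (biprod.snd ≫ biprod.inr ≫ r : X ⊞ W ⟶ _)
        = r - biprod.fst ≫ biprod.inl ≫ r := by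
      calc biprod.snd ≫ biprod.inr ≫ r = (𝟙 _ - biprod.fst ≫ biprod.inl) ≫ r := by
            rw [← biprod.total]
            simp only [Preadditive.sub_comp, Preadditive.add_comp, Category.assoc]
            abel
        _ = r - biprod.fst ≫ biprod.inl ≫ r := by simp [Preadditive.sub_comp]
    rw [t1, Preadditive.comp_sub, hr]
    congr 1
    rw [h1]
  have hi'n : i' ≫ biprod.inr ≫ r ≫ biprod.snd = i' := by
    rw [← hei, ← Category.assoc, hie, Category.id_comp]
  have hi'n' : ∀ {T : C} (k : W ⟶ T),
      i' ≫ biprod.inr ≫ r ≫ biprod.snd ≫ k = i' ≫ k := by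
    intro T k
    calc i' ≫ biprod.inr ≫ r ≫ biprod.snd ≫ k
        = (i' ≫ biprod.inr ≫ r ≫ biprod.snd) ≫ k := by simp
      _ = i' ≫ k := by rw [hi'n]
  have hnc0 : (biprod.inr ≫ r ≫ biprod.snd) ≫ biprod.inr ≫ r ≫ biprod.fst = 0 := by
    have t2 : (biprod.inr ≫ r ≫ biprod.snd) ≫ biprod.inr ≫ r ≫ biprod.fst
        = biprod.inr ≫ (r ≫ biprod.snd ≫ biprod.inr ≫ r) ≫ biprod.fst := by simp
    rw [t2, key2]
    simp [Preadditive.sub_comp, Preadditive.comp_sub]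
  have hnc : i' ≫ biprod.inr ≫ r ≫ biprod.fst = 0 := by
    calc i' ≫ biprod.inr ≫ r ≫ biprod.fst
        = (i' ≫ biprod.inr ≫ r ≫ biprod.snd) ≫ biprod.inr ≫ r ≫ biprod.fst := by rw [hi'n]
      _ = i' ≫ ((biprod.inr ≫ r ≫ biprod.snd) ≫ biprod.inr ≫ r ≫ biprod.fst) := by simp
      _ = 0 := by rw [hnc0, comp_zero]
  refine ⟨X ⊞ Y, biprod.desc biprod.inl (i' ≫ biprod.inr ≫ r),
    biprod.lift (r ≫ biprod.fst) (r ≫ biprod.snd ≫ e'), ?_, ?_⟩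
  · apply biprod.hom_ext'
    · apply biprod.hom_ext <;> simp [h1', hr']
    · apply biprod.hom_ext <;> simp [hr', hnc, hi'n', hie]
  · rw [biprod.lift_desc]
    have hA : (r ≫ biprod.snd ≫ e') ≫ i' ≫ biprod.inr ≫ r
        = r ≫ biprod.snd ≫ biprod.inr ≫ r ≫ biprod.snd ≫ biprod.inr ≫ r := by
      calc (r ≫ biprod.snd ≫ e') ≫ i' ≫ biprod.inr ≫ r
          = r ≫ biprod.snd ≫ (e' ≫ i') ≫ biprod.inr ≫ r := by simp
        _ = _ := by rw [hei]; simp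
    rw [hA]
    have hB : r ≫ biprod.snd ≫ biprod.inr ≫ r ≫ biprod.snd ≫ biprod.inr ≫ r
        = r - r ≫ biprod.fst ≫ biprod.inl := by
      calc r ≫ biprod.snd ≫ biprod.inr ≫ r ≫ biprod.snd ≫ biprod.inr ≫ r
          = (r ≫ biprod.snd ≫ biprod.inr ≫ r) ≫ biprod.snd ≫ biprod.inr ≫ r := by simp
        _ = (r - r ≫ biprod.fst ≫ biprod.inl) ≫ biprod.snd ≫ biprod.inr ≫ r := by rw [key2]
        _ = r ≫ biprod.snd ≫ biprod.inr ≫ r := by simp [Preadditive.sub_comp]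
        _ = r - r ≫ biprod.fst ≫ biprod.inl := key2
    rw [hB]
    have t3 : (r ≫ biprod.fst) ≫ (biprod.inl : X ⟶ X ⊞ W)
        = r ≫ biprod.fst ≫ biprod.inl := by simp
    rw [t3]
    abel

section Conj
variable {X W : C} (t : X ⟶ X ⊞ W) (v : X ⟶ X)

/-- The inverse of the triangular matrix `desc t inr` when `t ≫ fst` is invertible. -/
noncomputable def conjInv : X ⊞ W ⟶ X ⊞ W :=
  biprod.fst ≫ v ≫ biprod.inl - biprod.fst ≫ v ≫ t ≫ biprod.snd ≫ biprod.inr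
    + biprod.snd ≫ biprod.inr

variable (hv1 : t ≫ biprod.fst ≫ v = 𝟙 X) (hv2 : v ≫ t ≫ biprod.fst = 𝟙 X)
include hv1 hv2

lemma conj_comp : (biprod.desc t biprod.inr) ≫ conjInv t v = 𝟙 (X ⊞ W) := by
  have hv1' : ∀ {T : C} (k : X ⟶ T), t ≫ biprod.fst ≫ v ≫ k = k := by
    intro T k
    calc t ≫ biprod.fst ≫ v ≫ k = (t ≫ biprod.fst ≫ v) ≫ k := by simp
      _ = k := by rw [hv1, Category.id_comp]
  apply biprod.hom_ext' <;>
    simp [conjInv, Preadditive.comp_add, Preadditive.comp_sub, hv1']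

lemma comp_conj : conjInv t v ≫ (biprod.desc t biprod.inr) = 𝟙 (X ⊞ W) := by
  have hv2' : ∀ {T : C} (k : X ⟶ T), v ≫ t ≫ biprod.fst ≫ k = k := by
    intro T k
    calc v ≫ t ≫ biprod.fst ≫ k = (v ≫ t ≫ biprod.fst) ≫ k := by simp
      _ = k := by rw [hv2, Category.id_comp]
  have hvt : v ≫ t = biprod.inl + v ≫ t ≫ biprod.snd ≫ biprod.inr := by
    have h := biprod.total (X := X) (Y := W)
    have : v ≫ t ≫ 𝟙 (X ⊞ W)
        = v ≫ t ≫ (biprod.fst ≫ biprod.inl + biprod.snd ≫ biprod.inr) := by rw [h]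
    rw [Category.comp_id, Preadditive.comp_add, Preadditive.comp_add] at this
    rw [hv2'] at this
    exact this
  apply biprod.hom_ext' <;>
    simp [conjInv, Preadditive.add_comp, Preadditive.sub_comp, hvt]

end Conj

section FinSucc
variable {n : ℕ} (f : Fin (n + 1) → C)

noncomputable def finSuccHom : (⨁ f) ⟶ f 0 ⊞ ⨁ (f ∘ Fin.succ) :=
  biprod.lift (biproduct.π f 0) (biproduct.lift fun i => biproduct.π f i.succ)

noncomputable def finSuccInv : f 0 ⊞ ⨁ (f ∘ Fin.succ) ⟶ ⨁ f :=
  biprod.desc (biproduct.ι f 0) (biproduct.desc fun i => biproduct.ι f i.succ)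

lemma finSucc_hom_inv : finSuccHom f ≫ finSuccInv f = 𝟙 (⨁ f) := by
  rw [finSuccHom, finSuccInv, biprod.lift_desc, biproduct.lift_desc, ← biproduct.total,
    Fin.sum_univ_succ]

lemma finSucc_inv_hom : finSuccInv f ≫ finSuccHom f = 𝟙 (f 0 ⊞ ⨁ (f ∘ Fin.succ)) := by
  rw [finSuccInv, finSuccHom]
  apply biprod.hom_ext'
  · apply biprod.hom_ext
    · simp
    · apply biproduct.hom_ext
      intro j
      simp [biproduct.ι_π_ne _ (Fin.succ_ne_zero j).symm]
  · apply biprod.hom_ext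
    · apply biproduct.hom_ext'
      intro j
      simp [biproduct.ι_π_ne _ (Fin.succ_ne_zero j)]
    · apply biproduct.hom_ext'
      intro j
      apply biproduct.hom_ext
      intro k
      by_cases h : j = k
      · subst h; simp
      · have e1 : biproduct.ι f j.succ ≫ biproduct.π f k.succ = 0 :=
          biproduct.ι_π_ne _ (fun hh => h (Fin.succ_injective _ hh))
        have e2 : biproduct.ι (f ∘ Fin.succ) j ≫ biproduct.π (f ∘ Fin.succ) k = 0 :=
          biproduct.ι_π_ne _ h
        simp [e1, e2]
end FinSucc

lemma corner_idem {X W : C} (r : X ⊞ W ⟶ X ⊞ W) (hr : r ≫ r = r)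
    (h0 : biprod.inl ≫ r ≫ biprod.snd = 0) :
    (biprod.inr ≫ r ≫ biprod.snd) ≫ (biprod.inr ≫ r ≫ biprod.snd)
      = biprod.inr ≫ r ≫ biprod.snd := by
  have t1 : (biprod.inr ≫ r ≫ biprod.snd) ≫ biprod.inr ≫ r ≫ biprod.snd
      = biprod.inr ≫ (r ≫ (biprod.snd ≫ biprod.inr) ≫ r) ≫ biprod.snd := by simp
  have t2 : ((biprod.snd ≫ biprod.inr) : X ⊞ W ⟶ X ⊞ W)
      = 𝟙 _ - biprod.fst ≫ biprod.inl := by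
    rw [← biprod.total]; abel
  rw [t1, t2]
  have t3 : r ≫ (𝟙 (X ⊞ W) - biprod.fst ≫ biprod.inl) ≫ r
      = r - r ≫ biprod.fst ≫ biprod.inl ≫ r := by
    simp only [Preadditive.sub_comp, Preadditive.comp_sub, Category.id_comp, hr,
      Category.assoc]
  rw [t3, Preadditive.sub_comp, Preadditive.comp_sub]
  have t4 : biprod.inr ≫ (r ≫ biprod.fst ≫ biprod.inl ≫ r) ≫ biprod.snd
      = biprod.inr ≫ r ≫ biprod.fst ≫ (biprod.inl ≫ r ≫ biprod.snd) := by simp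
  rw [show biprod.inr ≫ (r ≫ biprod.fst ≫ biprod.inl ≫ r) ≫ biprod.snd
      = biprod.inr ≫ r ≫ biprod.fst ≫ (biprod.inl ≫ r ≫ biprod.snd) from t4, h0]
  simp

lemma splitsAs_of_iso_biproduct :
    ∀ (n : ℕ) (f : Fin n → C) (_ : ∀ i, IsLocalRing (End (f i)))
      (Z : C) (φh : Z ⟶ ⨁ f) (φi : ⨁ f ⟶ Z) (_ : φh ≫ φi = 𝟙 Z) (_ : φi ≫ φh = 𝟙 (⨁ f))
      (q : Z ⟶ Z) (_ : q ≫ q = q), SplitsAs q := by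
  intro n
  induction n with
  | zero =>
    intro f _ Z φh φi h1 h2 q hq
    have hid : 𝟙 (⨁ f) = 0 := by
      apply biproduct.hom_ext'
      intro j; exact j.elim0
    have hZ : 𝟙 Z = 0 := by
      calc 𝟙 Z = φh ≫ φi := h1.symm
        _ = φh ≫ 𝟙 (⨁ f) ≫ φi := by simp
        _ = 0 := by rw [hid]; simp
    refine ⟨Z, 𝟙 Z, 𝟙 Z, by simp, ?_⟩
    have hq0 : q = 0 := by
      calc q = q ≫ 𝟙 Z := (Category.comp_id q).symm
        _ = 0 := by rw [hZ, comp_zero]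
    rw [hq0, Category.id_comp, hZ]
  | succ n ih =>
    intro f hloc Z φh φi h1 h2 q hq
    set X := f 0 with hX
    set W := ⨁ (f ∘ Fin.succ) with hW
    set Φh : Z ⟶ X ⊞ W := φh ≫ finSuccHom f with hΦh
    set Φi : X ⊞ W ⟶ Z := finSuccInv f ≫ φi with hΦi
    have H1 : Φh ≫ Φi = 𝟙 Z := by
      rw [hΦh, hΦi]
      calc (φh ≫ finSuccHom f) ≫ finSuccInv f ≫ φi
          = φh ≫ (finSuccHom f ≫ finSuccInv f) ≫ φi := by simp
        _ = 𝟙 Z := by rw [finSucc_hom_inv]; simpa using h1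
    have H2 : Φi ≫ Φh = 𝟙 (X ⊞ W) := by
      rw [hΦh, hΦi]
      calc (finSuccInv f ≫ φi) ≫ φh ≫ finSuccHom f
          = finSuccInv f ≫ (φi ≫ φh) ≫ finSuccHom f := by simp
        _ = 𝟙 _ := by rw [h2]; simpa using finSucc_inv_hom f
    set q' : X ⊞ W ⟶ X ⊞ W := Φi ≫ q ≫ Φh with hq'def
    have hq' : q' ≫ q' = q' := by
      rw [hq'def]
      calc (Φi ≫ q ≫ Φh) ≫ Φi ≫ q ≫ Φh = Φi ≫ q ≫ (Φh ≫ Φi) ≫ q ≫ Φh := by simp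
        _ = Φi ≫ (q ≫ q) ≫ Φh := by rw [H1]; simp
        _ = Φi ≫ q ≫ Φh := by rw [hq]
    suffices hs : SplitsAs q' from splitsAs_conj Φi Φh H2 H1 q hs
    -- the corner of q' in the local ring End X
    set a : End X := biprod.inl ≫ q' ≫ biprod.fst with ha
    have hW' : ∀ (nn : W ⟶ W), nn ≫ nn = nn → SplitsAs nn := by
      intro nn hnn
      exact ih (f ∘ Fin.succ) (fun i => hloc i.succ) W (𝟙 W) (𝟙 W) (by simp) (Category.comp_id _) nn hnn
    have := hloc 0
    rcases IsLocalRing.isUnit_or_isUnit_of_add_one (a := a) (b := 1 - a) (by abel) with hu | hu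
    · -- corner of q' invertible
      obtain ⟨u, huu⟩ := hu
      set v : X ⟶ X := (↑u⁻¹ : End X) with hv
      have hva : (a : X ⟶ X) ≫ v = 𝟙 X := by rw [← huu]; exact u.inv_mul
      have hav : v ≫ (a : X ⟶ X) = 𝟙 X := by rw [← huu]; exact u.mul_inv
      set t : X ⟶ X ⊞ W := biprod.inl ≫ q' with ht
      have hv1 : t ≫ biprod.fst ≫ v = 𝟙 X := by
        calc t ≫ biprod.fst ≫ v = (biprod.inl ≫ q' ≫ biprod.fst) ≫ v := by rw [ht]; simp
          _ = 𝟙 X := by rw [← ha]; exact hva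
      have hv2 : v ≫ t ≫ biprod.fst = 𝟙 X := by
        calc v ≫ t ≫ biprod.fst = v ≫ biprod.inl ≫ q' ≫ biprod.fst := by rw [ht]; simp
          _ = 𝟙 X := by rw [← ha]; exact hav
      set g : X ⊞ W ⟶ X ⊞ W := biprod.desc t biprod.inr with hg
      set h : X ⊞ W ⟶ X ⊞ W := conjInv t v with hh
      have hgh : g ≫ h = 𝟙 _ := conj_comp t v hv1 hv2
      have hhg : h ≫ g = 𝟙 _ := comp_conj t v hv1 hv2
      set r : X ⊞ W ⟶ X ⊞ W := g ≫ q' ≫ h with hrdef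
      have hrr : r ≫ r = r := by
        rw [hrdef]
        calc (g ≫ q' ≫ h) ≫ g ≫ q' ≫ h = g ≫ q' ≫ (h ≫ g) ≫ q' ≫ h := by simp
          _ = g ≫ (q' ≫ q') ≫ h := by rw [hhg]; simp
          _ = g ≫ q' ≫ h := by rw [hq']
      have hrow : biprod.inl ≫ r = biprod.inl := by
        rw [hrdef]
        calc biprod.inl ≫ g ≫ q' ≫ h = (biprod.inl ≫ g) ≫ q' ≫ h := by simp
          _ = (biprod.inl ≫ q') ≫ q' ≫ h := by rw [hg, biprod.inl_desc, ht]
          _ = biprod.inl ≫ (q' ≫ q') ≫ h := by simp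
          _ = biprod.inl ≫ q' ≫ h := by rw [hq']
          _ = (biprod.inl ≫ g) ≫ h := by rw [hg, biprod.inl_desc, ht]; simp
          _ = biprod.inl := by rw [Category.assoc, hgh, Category.comp_id]
      have h0 : biprod.inl ≫ r ≫ biprod.snd = 0 := by
        rw [← Category.assoc, hrow]; simp
      have hsr : SplitsAs r :=
        splitsAs_of_row_one r hrr hrow (hW' _ (corner_idem r hrr h0))
      exact splitsAs_conj g h hgh hhg q' (by rw [← hrdef]; exact hsr)
    · -- corner of 𝟙 - q' invertible
      obtain ⟨u, hu⟩ := hu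
      set v : X ⟶ X := (↑u⁻¹ : End X) with hv
      set t : X ⟶ X ⊞ W := biprod.inl ≫ (𝟙 _ - q') with ht
      have hta : t ≫ biprod.fst = ((1 - a : End X) : X ⟶ X) := by
        rw [ht]
        simp [Preadditive.sub_comp, Preadditive.comp_sub, ha]
      have hva : ((1 - a : End X) : X ⟶ X) ≫ v = 𝟙 X := by rw [← hu]; exact u.inv_mul
      have hav : v ≫ ((1 - a : End X) : X ⟶ X) = 𝟙 X := by rw [← hu]; exact u.mul_inv
      have hv1 : t ≫ biprod.fst ≫ v = 𝟙 X := by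
        calc t ≫ biprod.fst ≫ v = (t ≫ biprod.fst) ≫ v := by simp
          _ = 𝟙 X := by rw [hta]; exact hva
      have hv2 : v ≫ t ≫ biprod.fst = 𝟙 X := by
        calc v ≫ t ≫ biprod.fst = v ≫ (t ≫ biprod.fst) := by simp
          _ = 𝟙 X := by rw [hta]; exact hav
      set g : X ⊞ W ⟶ X ⊞ W := biprod.desc t biprod.inr with hg
      set h : X ⊞ W ⟶ X ⊞ W := conjInv t v with hh
      have hgh : g ≫ h = 𝟙 _ := conj_comp t v hv1 hv2
      have hhg : h ≫ g = 𝟙 _ := comp_conj t v hv1 hv2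
      set r : X ⊞ W ⟶ X ⊞ W := g ≫ q' ≫ h with hrdef
      have hrr : r ≫ r = r := by
        rw [hrdef]
        calc (g ≫ q' ≫ h) ≫ g ≫ q' ≫ h = g ≫ q' ≫ (h ≫ g) ≫ q' ≫ h := by simp
          _ = g ≫ (q' ≫ q') ≫ h := by rw [hhg]; simp
          _ = g ≫ q' ≫ h := by rw [hq']
      have hrow : biprod.inl ≫ r = 0 := by
        rw [hrdef]
        calc biprod.inl ≫ g ≫ q' ≫ h = (biprod.inl ≫ g) ≫ q' ≫ h := by simp
          _ = (biprod.inl ≫ (𝟙 _ - q')) ≫ q' ≫ h := by rw [hg, biprod.inl_desc, ht]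
          _ = biprod.inl ≫ ((𝟙 _ - q') ≫ q') ≫ h := by simp
          _ = 0 := by
              rw [Preadditive.sub_comp, Category.id_comp, hq', sub_self]
              simp
      have h0 : biprod.inl ≫ r ≫ biprod.snd = 0 := by
        rw [← Category.assoc, hrow]; simp
      have hsr : SplitsAs r :=
        splitsAs_of_row_zero r hrr hrow (hW' _ (corner_idem r hrr h0))
      exact splitsAs_conj g h hgh hhg q' (by rw [← hrdef]; exact hsr)

end Split


end SplitAux

section Ext
variable (R : Type u) [CommRing R] (E : Type u) [AddCommGroup E] [Module R E]

/-- Injectivity of `E` extends to finite modules in any universe. -/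
lemma extension_property (hE : Module.Injective R E)
    {M N : Type w} [AddCommGroup M] [AddCommGroup N] [Module R M] [Module R N]
    [Module.Finite R M] [Module.Finite R N]
    (f : M →ₗ[R] N) (hf : Function.Injective f) (g : M →ₗ[R] E) :
    ∃ h : N →ₗ[R] E, ∀ m, h (f m) = g m := by
  obtain ⟨m, pM, hpM⟩ := Module.Finite.exists_fin' R M
  obtain ⟨n, pN, hpN⟩ := Module.Finite.exists_fin' R N
  let eM := pM.quotKerEquivOfSurjective hpM
  let eN := pN.quotKerEquivOfSurjective hpN
  let f' : ((Fin m → R) ⧸ LinearMap.ker pM) →ₗ[R] ((Fin n → R) ⧸ LinearMap.ker pN) :=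
    eN.symm.toLinearMap.comp (f.comp eM.toLinearMap)
  have hf' : Function.Injective f' := by
    simp only [f', LinearMap.coe_comp, LinearEquiv.coe_coe]
    exact eN.symm.injective.comp (hf.comp eM.injective)
  obtain ⟨h', hh'⟩ := hE.out f' hf' (g.comp eM.toLinearMap)
  refine ⟨h'.comp eN.symm.toLinearMap, fun mm => ?_⟩
  have := hh' (eM.symm mm)
  simpa [f'] using this

end Ext

/-- For a Hom-finite Krull-Schmidt `R`-linear triangulated category `T` and `X ∈ T`,
the functor `D Hom(X, -)` is representable if and only if it is coherent; consequently
`T_r = { X | D Hom(X, -) is coherent }`. -/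
theorem memR_iff_coherent
    (R : Type u) [CommRing R] [IsArtinianRing R]
    (E : Type u) [AddCommGroup E] [Module R E]
    (hE : IsMinimalInjectiveCogenerator R E)
    (C : Type v) [Category.{w} C] [Preadditive C] [CategoryTheory.Linear R C]
    [HasZeroObject C] [HasShift C ℤ] [∀ n : ℤ, (shiftFunctor C n).Additive]
    [Pretriangulated C] [HasFiniteBiproducts C]
    [∀ X Y : C, Module.Finite R (X ⟶ Y)]
    (hKS : IsKrullSchmidt C) :
    ∀ X : C, MemR R E X ↔ DHomRightCoherent R E X := by
  intro X
  constructor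
  · -- representable implies coherent
    rintro ⟨SX, φ, hφ⟩
    refine ⟨SX, SX, 0, fun Y => ((φ Y).symm : (Y ⟶ SX) →ₗ[R] _).toAddMonoidHom, ?_, ?_, ?_⟩
    · intro Y Y' g h
      apply (φ Y').injective
      show φ Y' ((φ Y').symm (g ≫ h)) = _
      rw [LinearEquiv.apply_symm_apply]
      show _ = φ Y' (((φ Y).symm h) ∘ₗ Linear.rightComp R X g)
      rw [hφ g ((φ Y).symm h), LinearEquiv.apply_symm_apply]
    · intro Y y
      constructor
      · intro h0
        have hy : y = 0 := by
          apply (φ Y).symm.injective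
          simpa using h0
        exact ⟨0, by simp [hy]⟩
      · rintro ⟨k, rfl⟩
        show (φ Y).symm (k ≫ 0) = 0
        simp
    · intro Y ψ
      exact ⟨φ Y ψ, by simp⟩
  · -- coherent implies representable
    rintro ⟨C₀, C₁, f, π, hnat, hexact, hsurj⟩
    obtain ⟨C₂, g, δ, hT⟩ := Pretriangulated.distinguished_cocone_triangle f
    set x : (X ⟶ C₁) →ₗ[R] E := π C₁ (𝟙 C₁) with hx
    have hstar : ∀ {Y : C} (h : Y ⟶ C₁), π Y h = x ∘ₗ Linear.rightComp R X h := by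
      intro Y h
      have := hnat h (𝟙 C₁)
      simpa using this
    have hxf : x ∘ₗ Linear.rightComp R X f = 0 := by
      rw [← hstar f]
      exact (hexact C₀ f).mpr ⟨𝟙 C₀, by simp⟩
    have htri : ∀ (k : X ⟶ C₁), k ≫ g = 0 → ∃ l : X ⟶ C₀, k = l ≫ f := fun k hk =>
      Pretriangulated.Triangle.coyoneda_exact₂ _ hT k hk
    set G : (X ⟶ C₁) →ₗ[R] (X ⟶ C₂) := Linear.rightComp R X g with hG
    have hker : LinearMap.ker G ≤ LinearMap.ker x := by
      intro k hk
      rw [LinearMap.mem_ker] at hk ⊢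
      obtain ⟨l, rfl⟩ := htri k hk
      have := LinearMap.congr_fun hxf l
      simpa using this
    set xbar : ((X ⟶ C₁) ⧸ LinearMap.ker G) →ₗ[R] E := (LinearMap.ker G).liftQ x hker
      with hxbar
    set Ghat : ((X ⟶ C₁) ⧸ LinearMap.ker G) →ₗ[R] (X ⟶ C₂) :=
      (LinearMap.ker G).liftQ G (le_refl _) with hGhat
    have hGhat_inj : Function.Injective Ghat := by
      rw [← LinearMap.ker_eq_bot]
      exact Submodule.ker_liftQ_eq_bot _ _ _ (le_refl _)
    obtain ⟨ξ, hξ⟩ := extension_property R E hE.injective Ghat hGhat_inj xbar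
    have hξg : ∀ (k : X ⟶ C₁), ξ (k ≫ g) = x k := by
      intro k
      have h1 := hξ (Submodule.Quotient.mk k)
      rw [hGhat, Submodule.liftQ_apply, hxbar, Submodule.liftQ_apply] at h1
      simpa [hG] using h1
    obtain ⟨h₀, hh₀⟩ := hsurj C₂ ξ
    have hfg : f ≫ g = 0 := Pretriangulated.comp_distTriang_mor_zero₁₂ _ hT
    have hghg : g ≫ h₀ ≫ g = g := by
      have h1 : π C₁ (g ≫ h₀) = x := by
        rw [hnat g h₀, hh₀]
        apply LinearMap.ext
        intro k
        show ξ (k ≫ g) = x k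
        exact hξg k
      have h2 : π C₁ (g ≫ h₀ - 𝟙 C₁) = 0 := by
        rw [map_sub, h1, ← hx]
        simp
      obtain ⟨l, hl⟩ := (hexact C₁ _).mp h2
      have h3 : (g ≫ h₀ - 𝟙 C₁) ≫ g = 0 := by
        rw [← hl, Category.assoc, hfg, comp_zero]
      rw [Preadditive.sub_comp, Category.id_comp, sub_eq_zero] at h3
      simpa using h3
    set e : C₂ ⟶ C₂ := h₀ ≫ g with he
    have hee : e ≫ e = e := by
      rw [he]
      calc (h₀ ≫ g) ≫ h₀ ≫ g = h₀ ≫ (g ≫ h₀ ≫ g) := by simp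
        _ = h₀ ≫ g := by rw [hghg]
    obtain ⟨nS, fS, ⟨isoS⟩, hlocS⟩ := hKS C₂
    obtain ⟨S, i, eS, hieS, heSi⟩ :=
      splitsAs_of_iso_biproduct nS fS hlocS C₂ isoS.hom isoS.inv (by simp) (by simp) e hee
    have hie : i ≫ e = i := by
      rw [← heSi, ← Category.assoc, hieS, Category.id_comp]
    have hge : g ≫ e = g := by rw [he, hghg]
    -- the inverse family of linear maps
    set χ : ∀ Y : C, (Y ⟶ S) →ₗ[R] ((X ⟶ Y) →ₗ[R] E) := fun Y =>
      { toFun := fun t => ξ ∘ₗ Linear.rightComp R X (t ≫ i)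
        map_add' := by
          intro t t'
          apply LinearMap.ext
          intro m
          simp [Preadditive.add_comp, Preadditive.comp_add]
        map_smul' := by
          intro r t
          apply LinearMap.ext
          intro m
          simp [Linear.smul_comp, Linear.comp_smul] } with hχ
    have hχapp : ∀ (Y : C) (t : Y ⟶ S) (m : X ⟶ Y), χ Y t m = ξ (m ≫ t ≫ i) := by
      intro Y t m
      simp [hχ]
    have hχπ : ∀ (Y : C) (t : Y ⟶ S), χ Y t = π Y (t ≫ i ≫ h₀) := by
      intro Y t
      apply LinearMap.ext
      intro m
      rw [hχapp, hstar (t ≫ i ≫ h₀)]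
      show ξ (m ≫ t ≫ i) = x (m ≫ t ≫ i ≫ h₀)
      rw [← hξg (m ≫ t ≫ i ≫ h₀)]
      congr 1
      calc m ≫ t ≫ i = m ≫ t ≫ (i ≫ e) := by rw [hie]
        _ = (m ≫ t ≫ i ≫ h₀) ≫ g := by rw [he]; simp
    have hχinj : ∀ Y : C, Function.Injective (χ Y) := by
      intro Y
      rw [injective_iff_map_eq_zero]
      intro t ht
      rw [hχπ Y t] at ht
      obtain ⟨l, hl⟩ := (hexact Y _).mp ht
      have h4 : (t ≫ i ≫ h₀) ≫ g = 0 := by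
        rw [← hl, Category.assoc, hfg, comp_zero]
      have h5 : t ≫ i = 0 := by
        have h9 : t ≫ i ≫ e = 0 := by rw [he]; simpa using h4
        calc t ≫ i = t ≫ i ≫ e := by rw [hie]
          _ = 0 := h9
      calc t = t ≫ 𝟙 S := by simp
        _ = t ≫ i ≫ eS := by rw [← hieS]
        _ = 0 := by rw [← Category.assoc, h5, zero_comp]
    have hχsurj : ∀ Y : C, Function.Surjective (χ Y) := by
      intro Y ψ
      obtain ⟨k, hk⟩ := hsurj Y ψ
      refine ⟨(k ≫ g) ≫ eS, ?_⟩
      apply LinearMap.ext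
      intro m
      rw [hχapp]
      have h6 : ((k ≫ g) ≫ eS) ≫ i = k ≫ g := by
        rw [Category.assoc, heSi]
        calc (k ≫ g) ≫ e = k ≫ (g ≫ e) := by simp
          _ = k ≫ g := by rw [hge]
      have h7 : m ≫ ((k ≫ g) ≫ eS) ≫ i = (m ≫ k) ≫ g := by rw [h6]; simp
      rw [h7, hξg (m ≫ k), ← hk, hstar k]
      simp
    set eqv : ∀ Y : C, (Y ⟶ S) ≃ₗ[R] ((X ⟶ Y) →ₗ[R] E) := fun Y =>
      LinearEquiv.ofBijective (χ Y) ⟨hχinj Y, hχsurj Y⟩ with heqv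
    have heqv_apply : ∀ (Y : C) (t : Y ⟶ S), eqv Y t = χ Y t := fun Y t => rfl
    have hχnat : ∀ {Y Y' : C} (g' : Y ⟶ Y') (t : Y' ⟶ S),
        χ Y (g' ≫ t) = (χ Y' t) ∘ₗ Linear.rightComp R X g' := by
      intro Y Y' g' t
      apply LinearMap.ext
      intro m
      rw [hχapp]
      show ξ (m ≫ (g' ≫ t) ≫ i) = χ Y' t (m ≫ g')
      rw [hχapp]
      congr 1
      simp
    refine ⟨S, fun Y => (eqv Y).symm, ?_⟩
    intro Y Y' g' ψ
    set t : Y' ⟶ S := (eqv Y').symm ψ with htdef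
    have hψ : ψ = χ Y' t := by
      rw [← heqv_apply, htdef, LinearEquiv.apply_symm_apply]
    have h8 : ψ ∘ₗ Linear.rightComp R X g' = χ Y (g' ≫ t) := by
      rw [hψ, hχnat]
    rw [h8, ← heqv_apply]
    rw [show eqv Y (g' ≫ t) = eqv Y (g' ≫ t) from rfl]
    rw [LinearEquiv.symm_apply_apply]

end GeneralizedSerreDuality
end

section
/- Let A be a Hom-finite R-linear abelian category. Then every object of A_r is projective in A, and every object of A_l is injective in A. -/
open CategoryTheory CategoryTheory.Limits CategoryTheory.Linear

universe w v u

namespace GeneralizedSerreDuality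

section
variable (R : Type u) [CommRing R] (E : Type u) [AddCommGroup E] [Module R E]
variable {C : Type v} [Category.{w} C] [Preadditive C] [CategoryTheory.Linear R C]

/-- `X ∈ C_l`: `D Hom(-, X)` is representable. -/
def MemL (X : C) : Prop :=
  ∃ (TX : C) (φ : ∀ Y : C, ((Y ⟶ X) →ₗ[R] E) ≃ₗ[R] (TX ⟶ Y)),
    ∀ ⦃Y Y' : C⦄ (g : Y ⟶ Y') (ψ : (Y ⟶ X) →ₗ[R] E),
      φ Y' (ψ ∘ₗ Linear.leftComp R X g) = φ Y ψ ≫ g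

end

/-- The cogenerator property extends to finitely generated modules in any universe. -/
lemma cogen_of_finite {R : Type u} [CommRing R] {E : Type u} [AddCommGroup E] [Module R E]
    (hE : IsMinimalInjectiveCogenerator R E)
    (M : Type w) [AddCommGroup M] [Module R M] [Module.Finite R M]
    (m : M) (hm : m ≠ 0) : ∃ f : M →ₗ[R] E, f m ≠ 0 := by
  obtain ⟨n, p, hp⟩ := Module.Finite.exists_fin' R M
  let e := p.quotKerEquivOfSurjective hp
  have hm' : e.symm m ≠ 0 := fun h => hm (by rw [← e.apply_symm_apply m, h, map_zero])
  obtain ⟨g, hg⟩ := hE.cogenerates ((Fin n → R) ⧸ LinearMap.ker p) (e.symm m) hm'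
  exact ⟨g ∘ₗ (e.symm : M →ₗ[R] _), by simpa using hg⟩

/-- If every functional on `N` killing the image of `F` is zero, then `F` is surjective. -/
lemma surj_of_dual {R : Type u} [CommRing R] {E : Type u} [AddCommGroup E] [Module R E]
    (hE : IsMinimalInjectiveCogenerator R E)
    {M : Type w} {N : Type w} [AddCommGroup M] [Module R M] [AddCommGroup N] [Module R N]
    [Module.Finite R N] (F : M →ₗ[R] N)
    (h : ∀ ψ : N →ₗ[R] E, ψ ∘ₗ F = 0 → ψ = 0) : Function.Surjective F := by
  intro n
  by_contra hn
  have hmem : n ∉ LinearMap.range F := fun ⟨m, hm⟩ => hn ⟨m, hm⟩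
  have hq : (Submodule.Quotient.mk n : N ⧸ LinearMap.range F) ≠ 0 := by
    simpa [Submodule.Quotient.mk_eq_zero] using hmem
  obtain ⟨g, hg⟩ := cogen_of_finite hE (N ⧸ LinearMap.range F) _ hq
  have : (g ∘ₗ (LinearMap.range F).mkQ) = 0 := by
    apply h
    ext m
    have : (Submodule.Quotient.mk (F m) : N ⧸ LinearMap.range F) = 0 :=
      (Submodule.Quotient.mk_eq_zero _).mpr (LinearMap.mem_range_self F m)
    simp [this]
  exact hg (by simpa using LinearMap.congr_fun this n)

/-- For a Hom-finite `R`-linear abelian category `A`, every object of `A_r` is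
projective and every object of `A_l` is injective. -/
theorem memR_projective_and_memL_injective
    (R : Type u) [CommRing R] [IsArtinianRing R]
    (E : Type u) [AddCommGroup E] [Module R E]
    (hE : IsMinimalInjectiveCogenerator R E)
    (A : Type v) [Category.{w} A] [Abelian A] [CategoryTheory.Linear R A]
    [∀ X Y : A, Module.Finite R (X ⟶ Y)] :
    (∀ X : A, MemR R E X → Projective X) ∧
    (∀ X : A, MemL R E X → Injective X) := by
  constructor
  · rintro X ⟨SX, φ, hφ⟩
    constructor
    intro Z Y f e he
    have hsurj : Function.Surjective (Linear.rightComp R X e : (X ⟶ Z) →ₗ[R] (X ⟶ Y)) := by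
      apply surj_of_dual hE
      intro ψ hψ
      have h1 := hφ e ψ
      rw [hψ, map_zero] at h1
      have h2 : e ≫ φ Y ψ = e ≫ 0 := by simpa using h1.symm
      have h3 : φ Y ψ = 0 := by
        rwa [cancel_epi e] at h2
      have := congrArg (φ Y).symm h3
      simpa using this
    obtain ⟨f', hf'⟩ := hsurj f
    exact ⟨f', hf'⟩
  · rintro X ⟨TX, φ, hφ⟩
    constructor
    intro Y Z g f hf
    have hsurj : Function.Surjective (Linear.leftComp R X f : (Z ⟶ X) →ₗ[R] (Y ⟶ X)) := by
      apply surj_of_dual hE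
      intro ψ hψ
      have h1 := hφ f ψ
      rw [hψ, map_zero] at h1
      have h2 : φ Y ψ ≫ f = 0 ≫ f := by simpa using h1.symm
      have h3 : φ Y ψ = 0 := by
        rwa [cancel_mono f] at h2
      have := congrArg (φ Y).symm h3
      simpa using this
    obtain ⟨h, hh⟩ := hsurj g
    exact ⟨h, hh⟩

end GeneralizedSerreDuality
end
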